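/- If G is a residually finite group and H is a finite subgroup of G, then H is finitely separable in G. -/
import Mathlib



/-- A group is residually finite if every nontrivial element has nontrivial
image under some homomorphism to a finite group. -/
def GroupResiduallyFinite (G : Type*) [Group G] : Prop :=
  ∀ g : G, g ≠ 1 → ∃ (F : Type) (_ : Group F) (_ : Finite F) (φ : G →* F),
    φ g ≠ 1

/-- A subgroup `H` of `G` is finitely separable if every `g ∈ G \ H` can be
separated from `H` by a homomorphism to a finite group. -/
def FinitelySeparable {G : Type*} [Group G] (H : Subgroup G) : Prop :=
  ∀ g : G, g ∉ H → ∃ (F : Type) (_ : Group F) (_ : Finite F) (φ : G →* F),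
    φ g ∉ H.map φ

/-- If `G` is a residually finite group and `H` is a finite subgroup of `G`,
then `H` is finitely separable in `G`. -/
theorem stmt11 (G : Type*) [Group G] (hG : GroupResiduallyFinite G)
    (H : Subgroup G) (hH : Finite H) : FinitelySeparable H := by
  intro g hg
  have key : ∀ h : H, ∃ (F : Type) (_ : Group F) (_ : Finite F) (φ : G →* F),
      φ g ≠ φ (h : G) := by
    intro h
    have hne : g * (h : G)⁻¹ ≠ 1 := by
      intro e
      exact hg (mul_inv_eq_one.mp e ▸ h.2)
    obtain ⟨F, _, _, φ, hφ⟩ := hG _ hne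
    refine ⟨F, ‹_›, ‹_›, φ, ?_⟩
    intro e
    apply hφ
    rw [map_mul, map_inv, e, mul_inv_cancel]
  choose F inst1 inst2 φ hφ using key
  letI : ∀ h : H, Group (F h) := inst1
  letI : ∀ h : H, Finite (F h) := inst2
  haveI := Fintype.ofFinite H
  let e : Fin (Fintype.card H) ≃ H := (Fintype.equivFin H).symm
  refine ⟨∀ i : Fin (Fintype.card H), F (e i), inferInstance, inferInstance,
    Pi.monoidHom (fun i => φ (e i)), ?_⟩
  rintro ⟨h, hh, heq⟩
  have this1 := congrFun heq (e.symm ⟨h, hh⟩)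
  refine hφ (e (e.symm ⟨h, hh⟩)) ?_
  rw [show ((e (e.symm ⟨h, hh⟩) : H) : G) = h from
    congrArg Subtype.val (e.apply_symm_apply ⟨h, hh⟩)]
  exact this1.symm
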